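/- Let f be a morphism, w an infinite word, and q a finite word such that f(w) is q-quasiperiodic and 2|q| ≤ |f(α)| for every letter α. Then either w = (a_1 … a_k)^ω for pairwise distinct letters a_1, …, a_k, or there exist words x, y, z and letters a, b with |xyz|_a = 0 and |z|_b = 0 such that x a y (b z)^ω is not quasiperiodic and f(x a y (b z)^ω) is q-quasiperiodic. -/

import Mathlib

namespace QPm

variable {A : Type*}

/-- Image of a finite word under a morphism given by images of letters. -/
def applyF (f : A → List A) (w : List A) : List A := (w.map f).flatten

/-- A morphism is non-erasing if images of letters are nonempty. -/
def NonErasing (f : A → List A) : Prop := ∀ a, f a ≠ []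

/-- `wpow u k` is the `k`-fold concatenation `u^k`. -/
def wpow (u : List A) (k : ℕ) : List A := (List.replicate k u).flatten

/-- Every position of `w` is covered by an occurrence of `q` in `w`. -/
def Covers (q w : List A) : Prop :=
  ∀ i < w.length, ∃ j, j ≤ i ∧ i < j + q.length ∧ j + q.length ≤ w.length ∧
    (w.drop j).take q.length = q

/-- `w` is `q`-quasiperiodic. -/
def QP (q w : List A) : Prop := q ≠ [] ∧ w ≠ q ∧ Covers q w

def Quasiperiodic (w : List A) : Prop := ∃ q, QP q w

def Superprimitive (w : List A) : Prop := ¬ Quasiperiodic w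

/-- `q` is THE quasiperiod (shortest quasiperiod) of `w`. -/
def IsQuasiperiod (q w : List A) : Prop :=
  QP q w ∧ ∀ q', QP q' w → q.length ≤ q'.length

/-- Every position of the infinite word `x` is covered by an occurrence of `q`. -/
def InfCovers (q : List A) (x : ℕ → A) : Prop :=
  ∀ i : ℕ, ∃ j, j ≤ i ∧ i < j + q.length ∧
    ∀ t (ht : t < q.length), x (j + t) = q.get ⟨t, ht⟩

/-- The infinite word `x` is `q`-quasiperiodic. -/
def InfQP (q : List A) (x : ℕ → A) : Prop := q ≠ [] ∧ InfCovers q x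

def InfQuasiperiodic (x : ℕ → A) : Prop := ∃ q, InfQP q x

/-- `q` is THE quasiperiod (shortest quasiperiod) of the infinite word `x`. -/
def IsInfQuasiperiod (q : List A) (x : ℕ → A) : Prop :=
  InfQP q x ∧ ∀ q', InfQP q' x → q.length ≤ q'.length

/-- Image of an infinite word under a (non-erasing) morphism: the `n`-th letter
of `f(x)` is the `n`-th letter of the image of a sufficiently long prefix. -/
def mapInf (f : A → List A) (x : ℕ → A) (n : ℕ) : A :=
  (applyF f (List.ofFn (fun i : Fin (n + 1) => x i))).getD n (x 0)

/-- `f` maps every (nonempty) finite word to a quasiperiodic word. -/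
def StronglyQPFin (f : A → List A) : Prop :=
  ∀ w : List A, w ≠ [] → Quasiperiodic (applyF f w)

/-- `f` maps every infinite word to a quasiperiodic infinite word. -/
def StronglyQPInf (f : A → List A) : Prop :=
  ∀ x : ℕ → A, InfQuasiperiodic (mapInf f x)

/-- `f` maps some non-quasiperiodic finite word to a quasiperiodic word. -/
def WeaklyQPFin (f : A → List A) : Prop :=
  ∃ w : List A, ¬ Quasiperiodic w ∧ Quasiperiodic (applyF f w)

/-- `f` maps some non-quasiperiodic infinite word to a quasiperiodic word. -/
def WeaklyQPInf (f : A → List A) : Prop :=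
  ∃ x : ℕ → A, ¬ InfQuasiperiodic x ∧ InfQuasiperiodic (mapInf f x)

/-- The ultimately periodic infinite word `u v^ω` (with default letter `d`
used only when `v` is empty). -/
def ultPer (u v : List A) (d : A) : ℕ → A :=
  fun n => if h : n < u.length then u.get ⟨n, h⟩
           else v.getD ((n - u.length) % v.length) d

/-- A finite word is primitive if it is not a power `u^k` with `k ≥ 2`. -/
def Primitive (w : List A) : Prop :=
  ¬ ∃ (u : List A) (k : ℕ), 2 ≤ k ∧ w = wpow u k

/-- `k`-fold composition of the morphism `f`. -/
def iterF (f : A → List A) : ℕ → A → List A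
  | 0, a => [a]
  | (k + 1), a => applyF f (iterF f k a)

theorem applyF_append (f : A → List A) (l₁ l₂ : List A) :
    applyF f (l₁ ++ l₂) = applyF f l₁ ++ applyF f l₂ := by
  simp [applyF]

/-- prefix of an infinite word -/
def pref (u : ℕ → A) (n : ℕ) : List A := List.ofFn (fun i : Fin n => u i)

theorem pref_succ (u : ℕ → A) (n : ℕ) : pref u (n+1) = pref u n ++ [u n] := by
  rw [pref, List.ofFn_succ']
  simp [pref, List.concat_eq_append, Fin.castSucc]

/-- start position of the n-th block in the image of u -/
def pos (f : A → List A) (u : ℕ → A) (n : ℕ) : ℕ := (applyF f (pref u n)).length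

theorem pos_zero (f : A → List A) (u : ℕ → A) : pos f u 0 = 0 := by
  simp [pos, pref, applyF]

theorem pos_succ (f : A → List A) (u : ℕ → A) (n : ℕ) :
    pos f u (n+1) = pos f u n + (f (u n)).length := by
  simp [pos, pref_succ, applyF_append, applyF]

theorem pos_lower (f : A → List A) (u : ℕ → A) (hone : ∀ a, 1 ≤ (f a).length) (n : ℕ) :
    n ≤ pos f u n := by
  induction n with
  | zero => simp [pos_zero]
  | succ n ih => have := hone (u n); rw [pos_succ]; omega

theorem pos_mono (f : A → List A) (u : ℕ → A) {a b : ℕ} (h : a ≤ b) :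
    pos f u a ≤ pos f u b := by
  induction b with
  | zero => simp_all
  | succ b ih =>
    rcases Nat.lt_or_ge a (b+1) with h' | h'
    · have := ih (by omega); rw [pos_succ]; omega
    · have : a = b + 1 := by omega
      subst this; exact le_refl _

theorem exists_cell (f : A → List A) (u : ℕ → A) (hone : ∀ a, 1 ≤ (f a).length) (x : ℕ) :
    ∃ n, pos f u n ≤ x ∧ x < pos f u (n+1) := by
  induction x with
  | zero =>
    exact ⟨0, by simp [pos_zero], by have := hone (u 0); rw [pos_succ, pos_zero]; omega⟩
  | succ x ih =>
    obtain ⟨n, h1, h2⟩ := ih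
    rcases Nat.lt_or_ge (x+1) (pos f u (n+1)) with h | h
    · exact ⟨n, by omega, h⟩
    · refine ⟨n+1, by omega, ?_⟩
      have := hone (u (n+1))
      have h3 := pos_succ f u (n+1)
      omega


theorem pos_length (f : A → List A) (u : ℕ → A) (N : ℕ) :
    (applyF f (pref u N)).length = pos f u N := rfl

theorem applyF_get (f : A → List A) (u : ℕ → A) {n x N : ℕ} (hn : n < N)
    (h1 : pos f u n ≤ x) (h2 : x < pos f u (n+1))
    (hx : x < (applyF f (pref u N)).length)
    (hxn : x - pos f u n < (f (u n)).length) :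
    (applyF f (pref u N))[x] = (f (u n))[x - pos f u n] := by
  induction N with
  | zero => omega
  | succ N ih =>
    rcases Nat.lt_or_ge n N with h | h
    · have hlt : x < (applyF f (pref u N)).length := by
        rw [pos_length]
        have := pos_mono f u (show n + 1 ≤ N by omega)
        omega
      have e : applyF f (pref u (N+1)) = applyF f (pref u N) ++ f (u N) := by
        rw [pref_succ, applyF_append]; simp [applyF]
      rw [List.getElem_of_eq e hx, List.getElem_append_left hlt, ih h hlt]
    · have hnN : n = N := by omega
      subst hnN
      have hppos : (applyF f (pref u n)).length = pos f u n := rfl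
      have e : applyF f (pref u (n+1)) = applyF f (pref u n) ++ f (u n) := by
        rw [pref_succ, applyF_append]; simp [applyF]
      rw [List.getElem_of_eq e hx]
      rw [List.getElem_append_right (by omega)]
      congr 1

theorem mapInf_eq (f : A → List A) (u : ℕ → A) (hone : ∀ a, 1 ≤ (f a).length)
    {n x : ℕ} (h1 : pos f u n ≤ x) (h2 : x < pos f u (n+1))
    (hxn : x - pos f u n < (f (u n)).length) :
    mapInf f u x = (f (u n))[x - pos f u n] := by
  have hx : x < (applyF f (pref u (x+1))).length := by
    rw [pos_length]
    exact lt_of_lt_of_le (by omega) (pos_lower f u hone (x+1))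
  have hn : n < x + 1 := by
    have := pos_lower f u hone n
    omega
  have : mapInf f u x = (applyF f (pref u (x+1)))[x] := by
    rw [mapInf]
    exact List.getD_eq_getElem _ _ hx
  rw [this, applyF_get f u hn h1 h2 hx hxn]



theorem take_getElem_eq {l₁ l₂ : List A} {M i : ℕ} (h : l₁.take M = l₂.take M)
    (hi : i < M) (h₁ : i < l₁.length) (h₂ : i < l₂.length) :
    l₁[i] = l₂[i] := by
  have e1 : (l₁.take M)[i]'(by simp; omega) = l₁[i] := List.getElem_take
  have e2 : (l₂.take M)[i]'(by simp; omega) = l₂[i] := List.getElem_take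
  rw [← e1, ← e2]
  exact List.getElem_of_eq h _

theorem junction_cover (f : A → List A) (q : List A) (w W : ℕ → A)
    (hlen : ∀ α : A, 2 * q.length ≤ (f α).length)
    (hL2 : 2 ≤ q.length)
    (hcov : InfCovers q (mapInf f w))
    (i n : ℕ) (hWn : W i = w n)
    (htake : (f (W (i+1))).take (2*q.length - 2) = (f (w (n+1))).take (2*q.length - 2))
    (x e : ℕ) (hx : x + (q.length - 1) = pos f W (i+1) + e) (he : e ≤ 2*q.length - 3) :
    ∃ j', j' ≤ x ∧ x < j' + q.length ∧
      ∀ t (ht : t < q.length), mapInf f W (j' + t) = q.get ⟨t, ht⟩ := by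
  set L := q.length with hLdef
  have hone : ∀ a, 1 ≤ (f a).length := fun a => le_trans (by omega) (hlen a)
  have hfn : 2*L ≤ (f (w n)).length := hlen _
  have hfn1 : 2*L ≤ (f (w (n+1))).length := hlen _
  have hfeq : f (W i) = f (w n) := by rw [hWn]
  have hfi : (f (W i)).length = (f (w n)).length := by rw [hfeq]
  have hfi1 : 2*L ≤ (f (W (i+1))).length := hlen _
  set B := pos f w (n+1) with hB
  set B' := pos f W (i+1) with hB'
  have hBn : pos f w n + (f (w n)).length = B := (pos_succ f w n).symm
  have hBn2 : B + (f (w (n+1))).length = pos f w (n+1+1) := (pos_succ f w (n+1)).symm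
  have hB'i : pos f W i + (f (W i)).length = B' := (pos_succ f W i).symm
  have hB'2 : B' + (f (W (i+1))).length = pos f W (i+1+1) := (pos_succ f W (i+1)).symm
  set X := B + e - (L - 1) with hX
  have hX' : X + (L-1) = B + e := by omega
  obtain ⟨j, hj1, hj2, hocc⟩ := hcov X
  have hj3 : pos f w n < j := by omega
  have hjL : j + L ≤ B + (2*L - 2) := by omega
  set j' := B' + j - B with hj'def
  have hj'B : j' + B = B' + j := by omega
  refine ⟨j', by omega, by omega, ?_⟩
  intro t ht
  have key : mapInf f W (j' + t) = mapInf f w (j + t) := by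
    rcases Nat.lt_or_ge (j + t) B with hξ | hξ
    · -- inside the left block
      set δ := B - (j + t) with hδ
      have hδ1 : 1 ≤ δ := by omega
      have hδ2 : δ ≤ 2*L - 2 := by omega
      have e1 : mapInf f w (j + t) = (f (w n))[(j+t) - pos f w n] :=
        mapInf_eq f w hone (by omega) (by omega) (by omega)
      have hpos' : j' + t + δ = B' := by omega
      have e2 : mapInf f W (j' + t) = (f (W i))[(j'+t) - pos f W i] :=
        mapInf_eq f W hone (by omega) (by omega) (by omega)
      rw [e1, e2]
      rw [List.getElem_of_eq hfeq]
      congr 1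
      omega
    · -- inside the right block
      set δ := (j + t) - B with hδ
      have hδ2 : δ ≤ 2*L - 3 := by omega
      have e1 : mapInf f w (j + t) = (f (w (n+1)))[(j+t) - B] :=
        mapInf_eq f w hone (by omega) (by omega) (by omega)
      have e2 : mapInf f W (j' + t) = (f (W (i+1)))[(j'+t) - B'] :=
        mapInf_eq f W hone (by omega) (by omega) (by omega)
      rw [e1, e2]
      have e3 : (f (W (i+1)))[(j'+t) - B']'(by omega) = (f (W (i+1)))[(j+t) - B]'(by omega) := by
        congr 1
        omega
      rw [e3]
      exact take_getElem_eq htake (by omega) (by omega) (by omega)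
  rw [key]
  exact hocc t ht


theorem transfer (f : A → List A) (q : List A) (w W : ℕ → A)
    (hlen : ∀ α : A, 2 * q.length ≤ (f α).length)
    (hL : 1 ≤ q.length)
    (hcov : InfCovers q (mapInf f w))
    (h0 : W 0 = w 0)
    (hjun : ∀ i, ∃ n, W i = w n ∧
      (f (W (i+1))).take (2*q.length - 2) = (f (w (n+1))).take (2*q.length - 2)) :
    InfCovers q (mapInf f W) := by
  intro x
  set L := q.length with hLdef
  have hone : ∀ a, 1 ≤ (f a).length := fun a => le_trans (by omega) (hlen a)
  obtain ⟨i, hc1, hc2⟩ := exists_cell f W hone x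
  have hposS : pos f W (i+1) = pos f W i + (f (W i)).length := pos_succ f W i
  have hfi : 2*L ≤ (f (W i)).length := hlen _
  rcases Nat.lt_or_ge (x - pos f W i + 2) (L + 1) with hsmall | hbig
  · -- near the left edge of block i
    rcases Nat.eq_zero_or_pos i with hi0 | hip
    · -- START: i = 0
      subst hi0
      have hp0 : pos f W 0 = 0 := pos_zero f W
      have hpw0 : pos f w 0 = 0 := pos_zero f w
      obtain ⟨j, hj1, hj2, hocc⟩ := hcov x
      have hw0 : 2*L ≤ (f (w 0)).length := hlen _
      have hPw1 : pos f w (0+1) = pos f w 0 + (f (w 0)).length := pos_succ f w 0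
      refine ⟨j, hj1, hj2, ?_⟩
      intro t ht
      have e1 : mapInf f w (j+t) = (f (w 0))[(j + t) - pos f w 0] :=
        mapInf_eq f w hone (by omega) (by omega) (by omega)
      have e2 : mapInf f W (j+t) = (f (W 0))[(j + t) - pos f W 0] :=
        mapInf_eq f W hone (by omega) (by omega) (by omega)
      rw [e2, ← hocc t ht, e1]
      have hfeq : f (W 0) = f (w 0) := by rw [h0]
      rw [List.getElem_of_eq hfeq]
      congr 1
    · -- LEFT JUNCTION with block i-1
      obtain ⟨n, hWn, htake⟩ := hjun (i-1)
      have hi1 : i - 1 + 1 = i := by omega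
      have hL2 : 2 ≤ L := by omega
      have := junction_cover f q w W hlen hL2 hcov (i-1) n hWn htake x
        ((x - pos f W i) + (L - 1))
        (by rw [hi1]; omega) (by omega)
      exact this
  · rcases Nat.lt_or_ge (x - pos f W i + L) ((f (W i)).length + 1) with hint | hrt
    · -- INTERIOR
      obtain ⟨n, hWn, _⟩ := hjun i
      have hfeq : f (W i) = f (w n) := by rw [hWn]
      have hfe : (f (W i)).length = (f (w n)).length := by rw [hfeq]
      have hPn : pos f w (n+1) = pos f w n + (f (w n)).length := pos_succ f w n
      obtain ⟨j, hj1, hj2, hocc⟩ := hcov (pos f w n + (x - pos f W i))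
      have hjn : pos f w n ≤ j := by omega
      refine ⟨pos f W i + (j - pos f w n), by omega, by omega, ?_⟩
      intro t ht
      have e1 : mapInf f w (j+t) = (f (w n))[(j + t) - pos f w n] :=
        mapInf_eq f w hone (by omega) (by omega) (by omega)
      have e2 : mapInf f W (pos f W i + (j - pos f w n) + t)
          = (f (W i))[(pos f W i + (j - pos f w n) + t) - pos f W i] :=
        mapInf_eq f W hone (by omega) (by omega) (by omega)
      rw [e2, ← hocc t ht, e1]
      rw [List.getElem_of_eq hfeq]
      congr 1
      omega
    · -- RIGHT JUNCTION at boundary i+1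
      obtain ⟨n, hWn, htake⟩ := hjun i
      have hL2 : 2 ≤ L := by omega
      exact junction_cover f q w W hlen hL2 hcov i n hWn htake x
        (x + (L-1) - pos f W (i+1)) (by omega) (by omega)





theorem not_infQP_of_unique (x : ℕ → A) (p : ℕ)
    (huniq : ∀ i, x i = x p → i = p) : ¬ InfQuasiperiodic x := by
  rintro ⟨q', ⟨hq'ne, hcov⟩⟩
  have hq'len : 1 ≤ q'.length := List.length_pos_iff.mpr hq'ne
  obtain ⟨j₀, hj₀1, hj₀2, hocc₀⟩ := hcov p
  have ht₀lt : p - j₀ < q'.length := by omega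
  have hq't₀ : q'.get ⟨p - j₀, ht₀lt⟩ = x p := by
    rw [← hocc₀ (p - j₀) ht₀lt]
    congr 1
    omega
  obtain ⟨j₁, hj₁1, hj₁2, hocc₁⟩ := hcov (p + q'.length)
  have h1 : x (j₁ + (p - j₀)) = x p := by rw [hocc₁ (p - j₀) ht₀lt, hq't₀]
  have := huniq _ h1
  omega

theorem mod_succ_cases (s c : ℕ) (hc : 1 ≤ c) :
    ((s+1) % c = s % c + 1 ∧ s % c + 1 < c) ∨ ((s+1) % c = 0 ∧ s % c + 1 = c) := by
  have h1 : s % c < c := Nat.mod_lt _ (by omega)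
  rcases Nat.lt_or_ge (s % c + 1) c with h | h
  · left
    refine ⟨?_, h⟩
    conv_lhs => rw [Nat.add_mod]
    have h2 : 1 % c = 1 := Nat.mod_eq_of_lt (by omega)
    rw [h2, Nat.mod_eq_of_lt h]
  · right
    have heq : s % c + 1 = c := by omega
    refine ⟨?_, heq⟩
    conv_lhs => rw [Nat.add_mod]
    rcases Nat.eq_or_lt_of_le hc with h3 | h3
    · simp [← h3]
      omega
    · have h2 : 1 % c = 1 := Nat.mod_eq_of_lt (by omega)
      rw [h2, heq, Nat.mod_self]

theorem inst_right [DecidableEq A] (f : A → List A) (q : List A) (w : ℕ → A)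
    (hlen : ∀ α : A, 2 * q.length ≤ (f α).length)
    (hqne : q ≠ [])
    (hcov : InfCovers q (mapInf f w))
    (p r n m N : ℕ) (hpr : p ≤ r) (hnm : n < m)
    (hNr : w N = w r)
    (hentry : (f (w (N+1))).take (2*q.length-2) = (f (w n)).take (2*q.length-2))
    (hwrap : (f (w n)).take (2*q.length-2) = (f (w m)).take (2*q.length-2))
    (hbonce : ∀ s, n < s → s < m → w s ≠ w n)
    (ha1 : ∀ s, s < p → w s ≠ w p)
    (ha2 : ∀ s, p < s → s ≤ r → w s ≠ w p)
    (ha3 : ∀ s, n ≤ s → s < m → w s ≠ w p) :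
    ∃ (x y z : List A) (a b : A),
      x.count a = 0 ∧ y.count a = 0 ∧ z.count a = 0 ∧ z.count b = 0 ∧
      ¬ InfQuasiperiodic (ultPer (x ++ [a] ++ y) ([b] ++ z) a) ∧
      InfQP q (mapInf f (ultPer (x ++ [a] ++ y) ([b] ++ z) a)) := by
  classical
  have hL : 1 ≤ q.length := List.length_pos_iff.mpr hqne
  set c := m - n with hc
  have hc1 : 1 ≤ c := by omega
  set W : ℕ → A := fun i => if i ≤ r then w i else w (n + (i - (r+1)) % c) with hWdef
  have hWle : ∀ i, i ≤ r → W i = w i := by intro i h; simp only [hWdef, if_pos h]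
  have hWgt : ∀ s, W (r+1+s) = w (n + s % c) := by
    intro s
    have hcond : ¬ (r+1+s ≤ r) := by omega
    simp only [hWdef, if_neg hcond]
    have hss : r+1+s - (r+1) = s := by omega
    rw [hss]
  have hexact : ∀ i, W i = w p → i = p := by
    intro i hi
    rcases Nat.lt_or_ge r i with h | h
    · obtain ⟨s, rfl⟩ : ∃ s, i = r+1+s := ⟨i - (r+1), by omega⟩
      rw [hWgt] at hi
      have hmod : s % c < c := Nat.mod_lt _ (by omega)
      exact absurd hi (ha3 _ (by omega) (by omega))
    · rw [hWle i h] at hi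
      by_contra hne
      rcases Nat.lt_or_ge i p with h2 | h2
      · exact ha1 i h2 hi
      · exact ha2 i (by omega) h hi
  have h0 : W 0 = w 0 := hWle 0 (by omega)
  have hjun : ∀ i, ∃ n', W i = w n' ∧
      (f (W (i+1))).take (2*q.length-2) = (f (w (n'+1))).take (2*q.length-2) := by
    intro i
    rcases Nat.lt_or_ge i r with h | h
    · exact ⟨i, hWle i (by omega), by rw [hWle (i+1) (by omega)]⟩
    rcases Nat.eq_or_lt_of_le h with h' | h'
    · -- i = r
      refine ⟨N, ?_, ?_⟩
      · rw [hWle i (by omega), ← h']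
        exact hNr.symm
      · have hWr1 : W (i+1) = w n := by
          have hi1 : i + 1 = r + 1 + 0 := by omega
          rw [hi1, hWgt]
          simp
        rw [hWr1]
        exact hentry.symm
    · -- i > r
      obtain ⟨s, rfl⟩ : ∃ s, i = r+1+s := ⟨i - (r+1), by omega⟩
      have hi1 : r+1+s+1 = r+1+(s+1) := by omega
      rcases mod_succ_cases s c hc1 with ⟨hm, hlt⟩ | ⟨hm, heq⟩
      · refine ⟨n + s % c, hWgt s, ?_⟩
        have hW1 : W (r+1+s+1) = w (n + s % c + 1) := by
          rw [hi1, hWgt, hm]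
          have : n + (s % c + 1) = n + s % c + 1 := by omega
          rw [this]
        rw [hW1]
      · refine ⟨m - 1, ?_, ?_⟩
        · rw [hWgt]
          congr 1
          omega
        · have hW1 : W (r+1+s+1) = w n := by
            rw [hi1, hWgt, hm]
            simp
          rw [hW1]
          have hm1 : m - 1 + 1 = m := by omega
          rw [hm1]
          exact hwrap
  -- the lists
  set x := (List.range p).map w with hx
  set a := w p with ha
  set y := (List.range (r - p)).map (fun s => w (p+1+s)) with hy
  set b := w n with hb
  set z := (List.range (c - 1)).map (fun s => w (n+1+s)) with hz
  have hu : (List.range (r+1)).map w = x ++ [a] ++ y := by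
    have h1 : r + 1 = (p+1) + (r - p) := by omega
    rw [h1, List.range_add, List.map_append, List.range_succ, List.map_append]
    simp only [hx, ha, hy, List.map_map, List.append_assoc, List.map_cons, List.map_nil]
    congr 1
  have hv : (List.range c).map (fun s => w (n+s)) = [b] ++ z := by
    apply List.ext_getElem
    · simp [hz]; omega
    · intro i h1' h2'
      simp only [List.getElem_map, List.getElem_range]
      rcases Nat.eq_zero_or_pos i with rfl | hipos
      · simp [hb]
      · have hi1 : i - 1 < z.length := by
          simp only [List.length_map, List.length_range] at h1' ⊢
          simp [hz]
          omega
        have e2 : ([b] ++ z)[i]'h2' = z[i-1]'hi1 := by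
          rw [List.getElem_append_right (by simp; omega)]
          simp
        rw [e2]
        simp only [hz, List.getElem_map, List.getElem_range]
        congr 1
        omega
  have hulen : (x ++ [a] ++ y).length = r + 1 := by
    rw [← hu]; simp
  have hvlen : ([b] ++ z).length = c := by
    rw [← hv]; simp
  have hUP : ultPer (x ++ [a] ++ y) ([b] ++ z) a = W := by
    funext i
    rw [ultPer]
    split
    case isTrue hcase =>
      have hir : i ≤ r := by omega
      have e1 : (x ++ [a] ++ y).get ⟨i, hcase⟩ = (x ++ [a] ++ y)[i] := rfl
      have e2 : (x ++ [a] ++ y)[i]'hcase = ((List.range (r+1)).map w)[i]'(by simp; omega) :=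
        (List.getElem_of_eq hu (by simp; omega)).symm
      rw [e1, e2]
      simp only [List.getElem_map, List.getElem_range]
      exact (hWle i hir).symm
    case isFalse hcase =>
      obtain ⟨s, rfl⟩ : ∃ s, i = r+1+s := ⟨i - (r+1), by omega⟩
      have hidx : (r+1+s - (x ++ [a] ++ y).length) % ([b] ++ z).length = s % c := by
        rw [hulen, hvlen]
        have hss : r+1+s - (r+1) = s := by omega
        rw [hss]
      rw [hidx]
      have hslt : s % c < ([b] ++ z).length := by rw [hvlen]; exact Nat.mod_lt _ (by omega)
      rw [List.getD_eq_getElem _ _ hslt]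
      have e2 : ([b] ++ z)[s % c]'hslt = ((List.range c).map (fun s => w (n+s)))[s % c]'(by simp; rw [hvlen] at hslt; simpa using hslt) :=
        (List.getElem_of_eq hv.symm _)
      rw [e2]
      simp only [List.getElem_map, List.getElem_range]
      exact (hWgt s).symm
  refine ⟨x, y, z, a, b, ?_, ?_, ?_, ?_, ?_, ?_⟩
  · rw [List.count_eq_zero]
    simp only [hx, List.mem_map, List.mem_range, not_exists, not_and]
    intro s hs
    exact ha1 s hs
  · rw [List.count_eq_zero]
    simp only [hy, List.mem_map, List.mem_range, not_exists, not_and]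
    intro s hs
    exact ha2 (p+1+s) (by omega) (by omega)
  · rw [List.count_eq_zero]
    simp only [hz, List.mem_map, List.mem_range, not_exists, not_and]
    intro s hs
    exact ha3 (n+1+s) (by omega) (by omega)
  · rw [List.count_eq_zero]
    simp only [hz, List.mem_map, List.mem_range, not_exists, not_and]
    intro s hs
    exact hbonce (n+1+s) (by omega) (by omega)
  · rw [hUP]
    have hWp : W p = w p := hWle p hpr
    apply not_infQP_of_unique W p
    intro i hi
    rw [hWp] at hi
    exact hexact i hi
  · rw [hUP]
    exact ⟨hqne, transfer f q w W hlen hL hcov h0 hjun⟩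


theorem mod_between (j t s : ℕ) (hj : 1 ≤ j) (h1 : t < s) (h2 : s < t + j) (h3 : s % j = t) :
    False := by
  have hdm := Nat.div_add_mod s j
  rcases Nat.eq_zero_or_pos (s / j) with h | h
  · rw [h] at hdm; omega
  · have : j ≤ j * (s / j) := Nat.le_mul_of_pos_right j h
    omega

theorem mod_eq_close (j s k : ℕ) (hj : 1 ≤ j) (h1 : s < k) (h2 : k - s < j)
    (h3 : s % j = k % j) : False := by
  have hdm1 := Nat.div_add_mod s j
  have hdm2 := Nat.div_add_mod k j
  have hle : s / j ≤ k / j := Nat.div_le_div_right (by omega)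
  rcases Nat.eq_or_lt_of_le hle with h | h
  · rw [h] at hdm1; omega
  · have : s / j + 1 ≤ k / j := h
    have : j * (s / j + 1) ≤ j * (k / j) := Nat.mul_le_mul_left j this
    have hmul : j * (s / j + 1) = j * (s / j) + j := by ring
    omega

theorem mod_add_le (j b : ℕ) (hj : 1 ≤ j) (h : j ≤ b) : b % j + j ≤ b := by
  have hdm := Nat.div_add_mod b j
  rcases Nat.eq_zero_or_pos (b / j) with h' | h'
  · rw [h'] at hdm
    have : b % j < j := Nat.mod_lt _ (by omega)
    omega
  · have : j ≤ j * (b / j) := Nat.le_mul_of_pos_right j h'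
    omega

theorem image_letter_mem_q (f : A → List A) (q : List A) (w : ℕ → A)
    (hlen : ∀ α : A, 2 * q.length ≤ (f α).length) (hL : 1 ≤ q.length)
    (hcov : InfCovers q (mapInf f w)) :
    ∀ s : ℕ, ∀ i, (hi : i < (f (w s)).length) → (f (w s))[i] ∈ q := by
  intro s i hi
  have hone : ∀ a, 1 ≤ (f a).length := fun a => le_trans (by omega) (hlen a)
  have hP : pos f w (s+1) = pos f w s + (f (w s)).length := pos_succ f w s
  have e1 : mapInf f w (pos f w s + i) = (f (w s))[(pos f w s + i) - pos f w s]'(by omega) :=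
    mapInf_eq f w hone (by omega) (by omega) (by omega)
  have e1' : (f (w s))[(pos f w s + i) - pos f w s]'(by omega) = (f (w s))[i]'hi := by
    congr 1
    omega
  obtain ⟨j, hj1, hj2, hocc⟩ := hcov (pos f w s + i)
  have e2 := hocc ((pos f w s + i) - j) (by omega)
  have e3 : j + ((pos f w s + i) - j) = pos f w s + i := by omega
  rw [e3] at e2
  rw [← e1', ← e1, e2]
  exact List.get_mem _ _

theorem finite_lists (S : Set A) (hS : S.Finite) (M : ℕ) :
    {l : List A | l.length = M ∧ ∀ a ∈ l, a ∈ S}.Finite := by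
  induction M with
  | zero =>
    apply Set.Finite.subset (Set.finite_singleton ([] : List A))
    rintro l ⟨h1, _⟩
    simp [List.length_eq_zero_iff.mp h1]
  | succ M ih =>
    have hsub : {l : List A | l.length = M+1 ∧ ∀ a ∈ l, a ∈ S} ⊆
        (fun p : A × List A => p.1 :: p.2) '' (S ×ˢ {l | l.length = M ∧ ∀ a ∈ l, a ∈ S}) := by
      rintro l ⟨h1, h2⟩
      cases l with
      | nil => simp at h1
      | cons hd tl =>
        refine ⟨(hd, tl), ⟨h2 hd (by simp), ?_, ?_⟩, rfl⟩
        · simpa using h1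
        · intro a ha
          exact h2 a (by simp [ha])
    exact Set.Finite.subset (Set.Finite.image _ (hS.prod ih)) hsub

theorem window_pigeonhole (f : A → List A) (q : List A) (w : ℕ → A)
    (hlen : ∀ α : A, 2 * q.length ≤ (f α).length) (hL : 1 ≤ q.length)
    (hcov : InfCovers q (mapInf f w)) (g : ℕ) :
    ∃ n m, g < n ∧ n < m ∧
      (f (w n)).take (2*q.length-2) = (f (w m)).take (2*q.length-2) := by
  by_contra hcon
  push_neg at hcon
  set T : ℕ → List A := fun s => (f (w (g+1+s))).take (2*q.length-2) with hT
  have hinj : Function.Injective T := by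
    intro s₁ s₂ he
    by_contra hne
    rcases Nat.lt_or_ge s₁ s₂ with h' | h'
    · exact hcon (g+1+s₁) (g+1+s₂) (by omega) (by omega) he
    · exact hcon (g+1+s₂) (g+1+s₁) (by omega) (by omega) he.symm
  have hsub : Set.range T ⊆ {l : List A | l.length = 2*q.length-2 ∧ ∀ a ∈ l, a ∈ q} := by
    rintro _ ⟨s, rfl⟩
    constructor
    · have := hlen (w (g+1+s))
      simp only [hT, List.length_take]
      omega
    · intro a ha
      have hmem : a ∈ f (w (g+1+s)) := List.mem_of_mem_take ha
      obtain ⟨i, hi, rfl⟩ := List.getElem_of_mem hmem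
      exact image_letter_mem_q f q w hlen hL hcov _ i hi
  have hfin : (Set.range T).Finite :=
    Set.Finite.subset (finite_lists {a | a ∈ q} (q.finite_toSet) _) hsub
  exact absurd hfin (Set.infinite_range_of_injective hinj)


theorem master (f : A → List A) (q : List A) (w : ℕ → A)
    (hlen : ∀ α : A, 2 * q.length ≤ (f α).length)
    (hqne : q ≠ [])
    (hcov : InfCovers q (mapInf f w)) :
    (∃ v : List A, ∃ hv : v ≠ [], v.Nodup ∧
      ∀ n : ℕ, w n = v.get ⟨n % v.length, Nat.mod_lt _ (List.length_pos_iff.mpr hv)⟩) ∨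
    (∃ p r n m N : ℕ, p ≤ r ∧ n < m ∧ w N = w r ∧
      (f (w (N+1))).take (2*q.length-2) = (f (w n)).take (2*q.length-2) ∧
      (f (w n)).take (2*q.length-2) = (f (w m)).take (2*q.length-2) ∧
      (∀ s, n < s → s < m → w s ≠ w n) ∧
      (∀ s, s < p → w s ≠ w p) ∧
      (∀ s, p < s → s ≤ r → w s ≠ w p) ∧
      (∀ s, n ≤ s → s < m → w s ≠ w p)) := by
  classical
  have hL : 1 ≤ q.length := List.length_pos_iff.mpr hqne
  by_cases hA : ∃ g, ∀ s, w s = w g → s = g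
  · -- CASE A : some letter occurs exactly once
    right
    obtain ⟨g, hg⟩ := hA
    by_cases hA1 : ∃ s₁, g < s₁ ∧ ∃ s₂, s₁ < s₂ ∧ w s₂ = w s₁
    · -- a later letter repeats
      obtain ⟨s₁, hs₁, hex⟩ := hA1
      set m₂ := Nat.find hex with hm₂
      obtain ⟨hm₂1, hm₂2⟩ := Nat.find_spec hex
      refine ⟨g, s₁ - 1, s₁, m₂, s₁ - 1, by omega, by omega, rfl, ?_, ?_, ?_, ?_, ?_, ?_⟩
      · have h1 : s₁ - 1 + 1 = s₁ := by omega
        rw [h1]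
      · rw [hm₂2]
      · intro s h1 h2 h3
        exact (Nat.find_min hex h2) ⟨h1, h3⟩
      · intro s h1 h2
        have := hg s h2
        omega
      · intro s h1 h2 h3
        have := hg s h3
        omega
      · intro s h1 h2 h3
        have := hg s h3
        omega
    · -- tail injective : use window pigeonhole
      push_neg at hA1
      obtain ⟨n, m, hn, hnm, htake⟩ := window_pigeonhole f q w hlen hL hcov g
      refine ⟨g, n - 1, n, m, n - 1, by omega, hnm, rfl, ?_, htake, ?_, ?_, ?_, ?_⟩
      · have h1 : n - 1 + 1 = n := by omega
        rw [h1]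
      · intro s h1 h2 h3
        exact hA1 n hn s h1 h3
      · intro s h1 h2
        have := hg s h2
        omega
      · intro s h1 h2 h3
        have := hg s h3
        omega
      · intro s h1 h2 h3
        have := hg s h3
        omega
  · -- CASE B : every letter occurs at least twice
    push_neg at hA
    have hA' : ∀ g, ∃ s, w s = w g ∧ s ≠ g := by
      intro g
      obtain ⟨s, hs⟩ := hA g
      exact ⟨s, by tauto, by tauto⟩
    have hrep : ∃ z, ∃ i, i < z ∧ w z = w i := by
      obtain ⟨s, hs1, hs2⟩ := hA' 0
      exact ⟨s, 0, by omega, hs1⟩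
    set j := Nat.find hrep with hjdef
    obtain ⟨i, hij, hwji⟩ := Nat.find_spec hrep
    have hQmin : ∀ z, z < j → ¬ ∃ i', i' < z ∧ w z = w i' := fun z hz => Nat.find_min hrep hz
    have hinj : ∀ a b, a < j → b < j → a ≠ b → w a ≠ w b := by
      intro a b ha hb hab he
      rcases Nat.lt_or_ge a b with h | h
      · exact hQmin b hb ⟨a, h, he.symm⟩
      · exact hQmin a ha ⟨b, by omega, he⟩
    have hj1 : 1 ≤ j := by omega
    rcases Nat.eq_zero_or_pos i with hi0 | hip
    swap
    · -- B1 : partner of the first repetition is positive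
      right
      refine ⟨0, i - 1, i, j, i - 1, by omega, hij, rfl, ?_, ?_, ?_, ?_, ?_, ?_⟩
      · have h1 : i - 1 + 1 = i := by omega
        rw [h1]
      · rw [hwji]
      · intro s h1 h2 h3
        exact hQmin s h2 ⟨i, h1, h3⟩
      · intro s h1
        omega
      · intro s h1 h2 h3
        exact hinj s 0 (by omega) (by omega) (by omega) h3
      · intro s h1 h2 h3
        exact hQmin s h2 ⟨0, by omega, h3⟩
    · -- B2 : w j = w 0
      subst hi0
      by_cases hdev : ∀ x, w x = w (x % j)
      · -- LEFT : w is purely periodic with nodup period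
        left
        set v := (List.range j).map w with hv
        have hvlen : v.length = j := by simp [hv]
        have hvne : v ≠ [] := by
          intro h
          rw [h] at hvlen
          simp at hvlen
          omega
        refine ⟨v, hvne, ?_, ?_⟩
        · rw [List.nodup_iff_injective_get]
          intro ⟨a, ha⟩ ⟨b, hb⟩ he
          simp only [hv, List.get_eq_getElem, List.getElem_map, List.getElem_range] at he
          rw [hvlen] at ha hb
          by_contra hne
          have : a ≠ b := by simpa using hne
          exact hinj a b ha hb this he
        · intro n'
          have h1 : v.get ⟨n' % v.length, Nat.mod_lt _ (List.length_pos_iff.mpr hvne)⟩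
              = w (n' % v.length) := by
            simp [hv]
          rw [h1, hvlen]
          exact hdev n'
      · -- deviation from the periodic pattern
        right
        push_neg at hdev
        set k := Nat.find hdev with hkdef
        have hk : w k ≠ w (k % j) := Nat.find_spec hdev
        have hres : ∀ x, x < k → w x = w (x % j) := by
          intro x hx
          by_contra h
          exact absurd (Nat.find_min hdev hx) (by simpa using h)
        have hkj : j + 1 ≤ k := by
          have hpre : ∀ x, x ≤ j → w x = w (x % j) := by
            intro x hx
            rcases Nat.lt_or_ge x j with h | h
            · rw [Nat.mod_eq_of_lt h]
            · have hxj : x = j := by omega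
              rw [hxj, Nat.mod_self]
              exact hwji
          by_contra h
          exact hk (hpre k (by omega))
        have htj : k % j < j := Nat.mod_lt _ (by omega)
        have ht'j : (k-1) % j < j := Nat.mod_lt _ (by omega)
        have hwk1 : w (k-1) = w ((k-1) % j) := hres (k-1) (by omega)
        by_cases hdv : ∃ c, c < j ∧ c ≠ k % j ∧ w c = w k
        · -- B2a : the deviating letter also occurs inside the period
          obtain ⟨c'', hc1, hc2, hc3⟩ := hdv
          set n := Nat.findGreatest (fun s => s % j = c'') (k-1) with hn
          have hspec : n % j = c'' :=
            Nat.findGreatest_spec (P := fun s => s % j = c'') (m := c'') (by omega)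
              (Nat.mod_eq_of_lt hc1)
          have hnle : n ≤ k-1 := Nat.findGreatest_le _
          have hmax : ∀ s, n < s → s ≤ k-1 → ¬ (s % j = c'') := by
            intro s h1 h2
            exact Nat.findGreatest_is_greatest (P := fun s => s % j = c'') h1 h2
          have hkn : k - n < j := by
            by_contra hcon
            push_neg at hcon
            rcases Nat.lt_or_ge (n + j) k with h' | h'
            · exact hmax (n+j) (by omega) (by omega) (by rw [Nat.add_mod_right]; exact hspec)
            · have he1 : n + j = k := by omega
              have he2 : k % j = c'' := by
                rw [← he1, Nat.add_mod_right]
                exact hspec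
              exact hc2 he2.symm
          have hn1 : 1 ≤ n := by
            by_contra hcon
            have hn0 : n = 0 := by omega
            rw [hn0] at hkn
            omega
          have hwn : w n = w k := by
            rw [hres n (by omega), hspec, hc3]
          set e'' := (n-1) % j with he''
          have he''j : e'' < j := Nat.mod_lt _ (by omega)
          have hjtk : k % j + j ≤ k := mod_add_le j k (by omega) (by omega)
          set r := if k % j ≤ e'' then e'' else e'' + j with hr
          have hrk : r < k := by
            rw [hr]
            split
            · omega
            · omega
          have hrmod : r % j = e'' := by
            rw [hr]
            split
            · exact Nat.mod_eq_of_lt he''j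
            · rw [Nat.add_mod_right]
              exact Nat.mod_eq_of_lt he''j
          have htr : k % j ≤ r := by
            rw [hr]
            split
            · omega
            · omega
          have hrtj : r < k % j + j := by
            rw [hr]
            split
            · omega
            · omega
          have hwr : w r = w (n-1) := by
            rw [hres r hrk, hrmod, ← hres (n-1) (by omega)]
          have hwnc : w n = w c'' := by rw [hres n (by omega), hspec]
          refine ⟨k % j, r, n, k, n - 1, htr, by omega, hwr.symm, ?_, ?_, ?_, ?_, ?_, ?_⟩
          · have h1 : n - 1 + 1 = n := by omega
            rw [h1]
          · rw [hwn]
          · -- b occurs once in the block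
            intro s h1 h2 h3
            have hs : w s = w (s % j) := hres s (by omega)
            have hsj : s % j < j := Nat.mod_lt _ (by omega)
            have hne : s % j ≠ c'' := hmax s h1 (by omega)
            exact hinj (s % j) c'' hsj hc1 hne (by rw [← hs, h3, hwnc])
          · -- a1
            intro s h1 h3
            exact hinj s (k % j) (by omega) htj (by omega) h3
          · -- a2
            intro s h1 h2 h3
            have hs : w s = w (s % j) := hres s (by omega)
            by_cases hmod : s % j = k % j
            · exact mod_between j (k % j) s (by omega) h1 (by omega) hmod
            · exact hinj (s % j) (k % j) (Nat.mod_lt _ (by omega)) htj hmod (by rw [← hs, h3])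
          · -- a3
            intro s h1 h2 h3
            have hs : w s = w (s % j) := hres s (by omega)
            by_cases hmod : s % j = k % j
            · exact mod_eq_close j s k (by omega) (by omega) (by omega) hmod
            · exact hinj (s % j) (k % j) (Nat.mod_lt _ (by omega)) htj hmod (by rw [← hs, h3])
        · -- B2b : the deviating letter is fresh
          push_neg at hdv
          have hdall : ∀ c, c < j → w c ≠ w k := by
            intro c hc hcontra
            by_cases hct : c = k % j
            · exact hk (by rw [← hct, hcontra])
            · exact hdv c hc hct hcontra
          have hm₁ex : ∃ s, k < s ∧ w s = w k := by
            obtain ⟨s, hs1, hs2⟩ := hA' k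
            rcases lt_trichotomy s k with h | h | h
            · exfalso
              have : w s = w (s % j) := hres s h
              exact hdall (s % j) (Nat.mod_lt _ (by omega)) (by rw [← this, hs1])
            · exact absurd h hs2
            · exact ⟨s, h, hs1⟩
          set m₁ := Nat.find hm₁ex with hm₁def
          obtain ⟨hm₁1, hm₁2⟩ := Nat.find_spec hm₁ex
          by_cases h6 : ∃ s2, k ≤ s2 ∧ s2 < m₁ ∧ w s2 = w 0
          · -- B2b-ii : v₀ returns before the deviating letter does
            obtain ⟨z, hz1, hz2, hz3⟩ := h6
            have hzk : k < z := by
              rcases Nat.eq_or_lt_of_le hz1 with h | h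
              · exact absurd (h ▸ hz3) (by
                  intro hcontra
                  exact hdall 0 (by omega) hcontra.symm)
              · exact h
            refine ⟨k, z - 1, 0, j, z - 1, by omega, by omega, rfl, ?_, ?_, ?_, ?_, ?_, ?_⟩
            · have h1 : z - 1 + 1 = z := by omega
              rw [h1, hz3]
            · rw [hwji]
            · intro s h1 h2 h3
              exact hinj s 0 (by omega) (by omega) (by omega) h3
            · intro s h1 h3
              rcases Nat.lt_or_ge s k with h | h
              · have hs : w s = w (s % j) := hres s h
                exact hdall (s % j) (Nat.mod_lt _ (by omega)) (by rw [← hs, h3])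
              · omega
            · intro s h1 h2 h3
              exact (Nat.find_min hm₁ex (show s < m₁ by omega)) ⟨by omega, h3⟩
            · intro s h1 h2 h3
              exact hdall s (by omega) h3
          · -- B2b-i : the first block of the deviating letter misses v₀
            push_neg at h6
            refine ⟨0, (k-1) % j, k, m₁, k - 1, by omega, hm₁1, hwk1, ?_, ?_, ?_, ?_, ?_, ?_⟩
            · have h1 : k - 1 + 1 = k := by omega
              rw [h1]
            · rw [hm₁2]
            · intro s h1 h2 h3
              exact (Nat.find_min hm₁ex h2) ⟨h1, h3⟩
            · intro s h1
              omega
            · intro s h1 h2 h3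
              have hs : s % j = s := Nat.mod_eq_of_lt (by omega)
              exact hinj s 0 (by omega) (by omega) (by omega) h3
            · intro s h1 h2 h3
              exact h6 s h1 h2 h3


theorem stmt18 {A : Type*} [DecidableEq A] (f : A → List A)
    (hf : NonErasing f) (w : ℕ → A) (q : List A)
    (hq : InfQP q (mapInf f w)) (hlen : ∀ α : A, 2 * q.length ≤ (f α).length) :
    (∃ v : List A, ∃ hv : v ≠ [], v.Nodup ∧
      ∀ n : ℕ, w n = v.get ⟨n % v.length, Nat.mod_lt _ (List.length_pos_iff.mpr hv)⟩) ∨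
    (∃ (x y z : List A) (a b : A),
      x.count a = 0 ∧ y.count a = 0 ∧ z.count a = 0 ∧ z.count b = 0 ∧
      ¬ InfQuasiperiodic (ultPer (x ++ [a] ++ y) ([b] ++ z) a) ∧
      InfQP q (mapInf f (ultPer (x ++ [a] ++ y) ([b] ++ z) a))) := by
  obtain ⟨hqne, hcov⟩ := hq
  rcases master f q w hlen hqne hcov with h |
    ⟨p, r, n, m, N, h1, h2, h3, h4, h5, h6, h7, h8, h9⟩
  · exact Or.inl h
  · exact Or.inr (inst_right f q w hlen hqne hcov p r n m N h1 h2 h3 h4 h5 h6 h7 h8 h9)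

end QPm
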